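/- For the chromatic derivatives K^n associated with the Legendre polynomials, K^n[sinc](t) = (−1)^n √(2n+1) · j_n(πt), where j_n is the spherical Bessel function of the first kind of order n and sinc t = sin(πt)/(πt). -/

import Mathlib

open Real

/-- The chromatic derivatives associated with recursion coefficients `γ`. -/
noncomputable def chromDeriv (γ : ℕ → ℝ) : ℕ → (ℝ → ℝ) → (ℝ → ℝ)
  | 0, f => f
  | 1, f => fun t => (1 / γ 0) * deriv f t
  | (n + 2), f => fun t =>
      (1 / γ (n + 1)) * deriv (chromDeriv γ (n + 1) f) t +
        (γ n / γ (n + 1)) * chromDeriv γ n f t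

/-- Recursion coefficients of the rescaled Legendre polynomials
`P^L_n(ω) = √(2n+1) L_n(ω/π)`. -/
noncomputable def legendreGamma (n : ℕ) : ℝ :=
  Real.pi * (n + 1) / Real.sqrt (4 * ((n : ℝ) + 1) ^ 2 - 1)

/-- The cardinal sine `sinc t = sin(πt)/(πt)`. -/
noncomputable def sinc (t : ℝ) : ℝ :=
  if t = 0 then 1 else Real.sin (Real.pi * t) / (Real.pi * t)

/-- The spherical Bessel functions of the first kind, via
`j_0(x) = sin x / x`, `j_1(x) = sin x / x² − cos x / x`, and the recurrence
`j_{n+2}(x) = ((2n+3)/x) j_{n+1}(x) − j_n(x)`. -/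
noncomputable def sphBessel : ℕ → ℝ → ℝ
  | 0, x => if x = 0 then 1 else Real.sin x / x
  | 1, x => if x = 0 then 0 else Real.sin x / x ^ 2 - Real.cos x / x
  | (n + 2), x => if x = 0 then 0 else
      (2 * (n : ℝ) + 3) / x * sphBessel (n + 1) x - sphBessel n x

namespace ChromAux

/-- `OO n = (2n+1)!! = ∏_{i=0}^{n} (2i+1)`. -/
noncomputable def OO : ℕ → ℝ
  | 0 => 1
  | (n+1) => OO n * (2*n+3)

lemma one_le_OO (n : ℕ) : 1 ≤ OO n := by
  induction n with
  | zero => simp [OO]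
  | succ n ih =>
    have h : (1:ℝ) ≤ 2*n+3 := by
      have : (0:ℝ) ≤ n := Nat.cast_nonneg n
      linarith
    calc (1:ℝ) = 1 * 1 := by ring
    _ ≤ OO n * (2*n+3) := mul_le_mul ih h zero_le_one (le_trans zero_le_one ih)
    _ = OO (n+1) := rfl

lemma OO_pos (n : ℕ) : 0 < OO n := lt_of_lt_of_le one_pos (one_le_OO n)

lemma OO_ne (n : ℕ) : OO n ≠ 0 := (OO_pos n).ne'

/-- Coefficients of the spherical Bessel power series. -/
noncomputable def aa (n k : ℕ) : ℝ := (-1)^k / (2^k * k.factorial * OO (n+k))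

lemma abs_aa_le (n k : ℕ) : |aa n k| ≤ 1 / k.factorial := by
  unfold aa
  have h1 : (0:ℝ) < k.factorial := by positivity
  have hden : (0:ℝ) < 2^k * k.factorial * OO (n+k) := by
    have := OO_pos (n+k); positivity
  rw [abs_div, abs_pow, abs_neg, abs_one, one_pow, abs_of_pos hden]
  apply one_div_le_one_div_of_le h1
  calc (k.factorial : ℝ) = 1 * k.factorial * 1 := by ring
  _ ≤ 2^k * k.factorial * OO (n+k) := by
      apply mul_le_mul _ (one_le_OO _) zero_le_one (by positivity)
      apply mul_le_mul_of_nonneg_right _ h1.le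
      exact one_le_pow₀ (by norm_num : (1:ℝ) ≤ 2)

/-- `(2k+1)! = 2^k k! (2k+1)!!`. -/
lemma fact_odd (k : ℕ) : ((2*k+1).factorial : ℝ) = 2^k * k.factorial * OO k := by
  induction k with
  | zero => simp [OO]
  | succ k ih =>
    have h : 2*(k+1)+1 = (2*k+1) + 1 + 1 := by ring
    rw [h, Nat.factorial_succ, Nat.factorial_succ]
    push_cast
    rw [ih, show OO (k+1) = OO k * (2*k+3) from rfl, Nat.factorial_succ]
    push_cast
    ring

/-- Power series form of the spherical Bessel functions. -/
noncomputable def JJ (n : ℕ) (x : ℝ) : ℝ := ∑' k, aa n k * x^(2*k+n)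

lemma term_bound (n k : ℕ) (x : ℝ) :
    ‖aa n k * x^(2*k+n)‖ ≤ |x|^n * ((x^2)^k / k.factorial) := by
  rw [norm_mul, norm_pow, Real.norm_eq_abs, Real.norm_eq_abs,
    show |x|^(2*k+n) = (x^2)^k * |x|^n by rw [pow_add, pow_mul, sq_abs]]
  calc |aa n k| * ((x^2)^k * |x|^n)
      ≤ (1/k.factorial) * ((x^2)^k * |x|^n) :=
        mul_le_mul_of_nonneg_right (abs_aa_le n k) (by positivity)
  _ = |x|^n * ((x^2)^k / k.factorial) := by ring

lemma summable_JJ (n : ℕ) (x : ℝ) : Summable fun k => aa n k * x^(2*k+n) := by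
  apply Summable.of_norm_bounded (((Real.summable_pow_div_factorial (x^2)).mul_left (|x|^n)))
  intro k
  exact term_bound n k x

lemma hasSum_JJ (n : ℕ) (x : ℝ) :
    HasSum (fun k => aa n k * x^(2*k+n)) (JJ n x) := (summable_JJ n x).hasSum

/-- Shift a `HasSum` by one, inserting a zero first term. -/
lemma hasSum_shift {f : ℕ → ℝ} {S : ℝ} (h : HasSum f S) :
    HasSum (fun k : ℕ => if k = 0 then 0 else f (k-1)) S := by
  apply (hasSum_nat_add_iff' 1).mp
  simpa using h

lemma summable_aux (y : ℝ) : Summable (fun k : ℕ => (k:ℝ) * y ^ k / k.factorial) := by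
  rw [← summable_nat_add_iff 1]
  have : (fun k : ℕ => ((k+1:ℕ):ℝ) * y ^ (k+1) / (k+1).factorial)
      = fun k : ℕ => y * (y^k / k.factorial) := by
    funext k
    rw [Nat.factorial_succ]
    push_cast
    have h1 : ((k:ℝ)+1) ≠ 0 := by positivity
    have h2 : (k.factorial : ℝ) ≠ 0 := by positivity
    field_simp
    ring
  rw [this]
  exact (Real.summable_pow_div_factorial y).mul_left y

lemma hasDerivAt_JJ (n : ℕ) (x : ℝ) :
    HasDerivAt (JJ n) (∑' k, aa n k * ((2*(k:ℝ)+n) * x^(2*k+n-1))) x := by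
  set R : ℝ := |x| + 1 with hRdef
  have hR1 : 1 ≤ R := by rw [hRdef]; linarith [abs_nonneg x]
  have hR0 : 0 < R := lt_of_lt_of_le one_pos hR1
  have hxball : x ∈ Metric.ball (0:ℝ) R := by
    rw [Metric.mem_ball, dist_zero_right, Real.norm_eq_abs]
    linarith
  have hsum_bound : Summable (fun k : ℕ => R^n * (2 * ((k:ℝ) * (R^2)^k / k.factorial)
      + (n:ℝ) * ((R^2)^k / k.factorial))) := by
    apply Summable.mul_left
    exact ((summable_aux (R^2)).mul_left 2).add
      ((Real.summable_pow_div_factorial (R^2)).mul_left (n:ℝ))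
  have := hasDerivAt_tsum_of_isPreconnected hsum_bound Metric.isOpen_ball
    (convex_ball (0:ℝ) R).isPreconnected
    (g := fun k z => aa n k * z^(2*k+n))
    (g' := fun k y => aa n k * ((2*(k:ℝ)+n) * y^(2*k+n-1)))
    (fun k y _ => by
      have := (hasDerivAt_pow (2*k+n) y).const_mul (aa n k)
      have hc : ((2*k+n : ℕ):ℝ) = 2*(k:ℝ)+n := by push_cast; ring
      rwa [hc] at this)
    (fun k y hy => by
      have hyR : |y| ≤ R := by
        have := Metric.mem_ball.mp hy
        rw [dist_zero_right, Real.norm_eq_abs] at this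
        linarith
      have hy0 : (0:ℝ) ≤ |y| := abs_nonneg y
      rw [Real.norm_eq_abs, abs_mul, abs_mul, abs_pow]
      have h1 : |aa n k| ≤ 1 / k.factorial := abs_aa_le n k
      have h2 : |y|^(2*k+n-1) ≤ R^(2*k+n) := by
        calc |y|^(2*k+n-1) ≤ R^(2*k+n-1) := pow_le_pow_left₀ hy0 hyR _
        _ ≤ R^(2*k+n) := pow_le_pow_right₀ hR1 (Nat.sub_le _ _)
      have h3 : |2*(k:ℝ)+n| = 2*(k:ℝ)+n := abs_of_nonneg (by positivity)
      calc |aa n k| * (|2*(k:ℝ)+n| * |y|^(2*k+n-1))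
          ≤ (1/k.factorial) * ((2*(k:ℝ)+n) * R^(2*k+n)) := by
            apply mul_le_mul h1 _ (by positivity) (by positivity)
            rw [h3]
            exact mul_le_mul_of_nonneg_left h2 (by positivity)
      _ = R^n * (2*((k:ℝ) * (R^2)^k / k.factorial) + (n:ℝ) * ((R^2)^k / k.factorial)) := by
            rw [pow_add, pow_mul]
            field_simp)
    hxball (summable_JJ n x) hxball
  exact this

lemma OO_succ (n : ℕ) : OO (n+1) = OO n * (2*(n:ℝ)+3) := by
  show OO n * (2*(n:ℕ)+3 : ℝ) = _
  push_cast
  ring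

/-- coefficient form of `sin`: `aa 0 k = (-1)^k/(2k+1)!` -/
lemma coeff_sin (k : ℕ) : aa 0 k = (-1)^k / ((2*k+1).factorial : ℝ) := by
  unfold aa
  rw [fact_odd, Nat.zero_add]

lemma mul_JJ0 (x : ℝ) : x * JJ 0 x = Real.sin x := by
  have h1 : HasSum (fun k => x * (aa 0 k * x^(2*k+0))) (x * JJ 0 x) :=
    (hasSum_JJ 0 x).mul_left x
  have h2 : (fun k => x * (aa 0 k * x^(2*k+0)))
      = fun k : ℕ => (-1)^k * x^(2*k+1) / (2*k+1).factorial := by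
    funext k
    rw [coeff_sin, Nat.add_zero, pow_succ]
    ring
  rw [h2] at h1
  exact h1.unique (Real.hasSum_sin x)

lemma JJ0_zero : JJ 0 0 = 1 := by
  have h1 : HasSum (fun k : ℕ => aa 0 k * (0:ℝ)^(2*k+0)) (JJ 0 0) := hasSum_JJ 0 0
  have h2 : (fun k : ℕ => aa 0 k * (0:ℝ)^(2*k+0)) = fun k : ℕ => if k = 0 then 1 else 0 := by
    funext k
    cases k with
    | zero => simp [aa, OO]
    | succ k => simp [zero_pow]
  rw [h2] at h1
  have h3 : HasSum (fun k : ℕ => if k = 0 then (1:ℝ) else 0) 1 := by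
    simpa using hasSum_ite_eq (0:ℕ) (1:ℝ)
  exact h1.unique h3

lemma JJ_succ_zero (n : ℕ) : JJ (n+1) 0 = 0 := by
  have h1 : HasSum (fun k : ℕ => aa (n+1) k * (0:ℝ)^(2*k+(n+1))) (JJ (n+1) 0) :=
    hasSum_JJ (n+1) 0
  have h2 : (fun k : ℕ => aa (n+1) k * (0:ℝ)^(2*k+(n+1))) = fun _ => (0:ℝ) := by
    funext k
    simp [zero_pow]
  rw [h2] at h1
  simpa using h1.unique hasSum_zero

set_option maxHeartbeats 1000000 in
lemma sq_mul_JJ1 (x : ℝ) : x^2 * JJ 1 x = Real.sin x - x * Real.cos x := by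
  have hs := (Real.hasSum_sin x).sub ((Real.hasSum_cos x).mul_left x)
  have h1 : HasSum (fun k : ℕ => if k = 0 then 0 else x^2 * (aa 1 (k-1) * x^(2*(k-1)+1)))
      (x^2 * JJ 1 x) := hasSum_shift ((hasSum_JJ 1 x).mul_left (x^2))
  have h2 : (fun k : ℕ => if k = 0 then 0 else x^2 * (aa 1 (k-1) * x^(2*(k-1)+1)))
      = fun k : ℕ => (-1)^k * x^(2*k+1)/((2*k+1).factorial : ℝ)
          - x * ((-1)^k * x^(2*k)/((2*k).factorial : ℝ)) := by
    funext k
    cases k with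
    | zero => simp
    | succ k =>
      simp only [Nat.succ_ne_zero, if_false, Nat.succ_sub_one]
      have e1 : x^2 * (aa 1 k * x^(2*k+1)) = aa 1 k * x^(2*(k+1)+1) := by
        rw [show 2*(k+1)+1 = (2*k+1)+2 from by ring, pow_add]
        ring
      have e2 : aa 1 k = (-1)^k * (2*(k:ℝ)+2) / ((2*(k+1)+1).factorial : ℝ) := by
        unfold aa
        rw [fact_odd (k+1)]
        rw [Nat.factorial_succ, show (1+k) = (k+1) from Nat.add_comm 1 k, OO_succ]
        have hO := OO_ne k
        have hf : (k.factorial : ℝ) ≠ 0 := by positivity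
        push_cast
        have h2k : (2:ℝ)^(k+1) = 2 * 2^k := by ring
        field_simp
        ring
      rw [e1, e2]
      have hfs : ((2*(k+1)+1).factorial : ℝ) = (2*(k+1)+1) * ((2*(k+1)).factorial : ℝ) := by
        rw [Nat.factorial_succ]; push_cast; ring
      rw [show 2*(k+1) = 2*k+2 from by ring] at hfs ⊢
      rw [hfs]
      have hff : ((2*k+2).factorial : ℝ) ≠ 0 := by positivity
      push_cast
      field_simp
      ring
  rw [h2] at h1
  exact h1.unique hs

lemma coeff_rec (n k : ℕ) :
    (2*(n:ℝ)+3) * aa (n+1) (k+1) - aa n (k+1) = aa (n+2) k := by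
  unfold aa
  rw [show (n+1)+(k+1) = (n+k+1)+1 from by omega, show n+(k+1) = n+k+1 from by omega,
      show (n+2)+k = (n+k+1)+1 from by omega, OO_succ, Nat.factorial_succ]
  have h1 := OO_ne (n+k+1)
  have h2 : (k.factorial:ℝ) ≠ 0 := by positivity
  push_cast
  field_simp
  ring

lemma coeff_rec0 (n : ℕ) : (2*(n:ℝ)+3) * aa (n+1) 0 = aa n 0 := by
  unfold aa
  rw [show (n+1)+0 = n+1 from by omega, show n+0 = n from by omega, OO_succ]
  have h1 := OO_ne n
  field_simp

set_option maxHeartbeats 1000000 in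
lemma JJ_rec (n : ℕ) (x : ℝ) :
    x * JJ (n+2) x = (2*(n:ℝ)+3) * JJ (n+1) x - x * JJ n x := by
  have hAB := ((hasSum_JJ (n+1) x).mul_left (2*(n:ℝ)+3)).sub ((hasSum_JJ n x).mul_left x)
  have hC := hasSum_shift ((hasSum_JJ (n+2) x).mul_left x)
  have hfun : (fun k : ℕ => if k = 0 then 0 else x * (aa (n+2) (k-1) * x^(2*(k-1)+(n+2))))
      = fun k : ℕ => (2*(n:ℝ)+3) * (aa (n+1) k * x^(2*k+(n+1))) - x * (aa n k * x^(2*k+n)) := by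
    funext k
    cases k with
    | zero =>
      rw [if_pos rfl, show 2*0+(n+1) = n+1 from by omega, show 2*0+n = n from by omega]
      linear_combination (-(x^(n+1))) * coeff_rec0 n
    | succ k =>
      rw [if_neg (Nat.succ_ne_zero k), Nat.succ_sub_one,
          show 2*k+(n+2) = 2*k+n+2 from by omega,
          show 2*(k+1)+(n+1) = (2*k+n+2)+1 from by omega,
          show 2*(k+1)+n = (2*k+n+2) from by omega]
      linear_combination (-(x^(2*k+n+3))) * coeff_rec n k
  rw [hfun] at hC
  exact hC.unique hAB

set_option maxHeartbeats 1000000 in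
lemma coeff_d0 (k : ℕ) : aa 0 (k+1) * (2*(k:ℝ)+2) = -(aa 1 k) := by
  unfold aa
  rw [show 0+(k+1) = k+1 from by omega, show 1+k = k+1 from by omega, OO_succ,
    Nat.factorial_succ]
  have h1 := OO_ne k
  have h2 : (k.factorial:ℝ) ≠ 0 := by positivity
  push_cast
  field_simp
  ring

set_option maxHeartbeats 1000000 in
lemma hasDerivAt_JJ0 (x : ℝ) : HasDerivAt (JJ 0) (-JJ 1 x) x := by
  have h := hasDerivAt_JJ 0 x
  have hs := hasSum_shift ((hasSum_JJ 1 x).neg)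
  have hfun : (fun k : ℕ => if k = 0 then 0 else -(aa 1 (k-1) * x^(2*(k-1)+1)))
      = fun k : ℕ => aa 0 k * ((2*(k:ℝ)+(0:ℕ)) * x^(2*k+0-1)) := by
    funext k
    cases k with
    | zero => norm_num
    | succ k =>
      simp only [Nat.succ_ne_zero, if_false, Nat.succ_sub_one]
      rw [show 2*(k+1)+0-1 = 2*k+1 from by omega]
      push_cast
      linear_combination (-(x^(2*k+1))) * coeff_d0 k
  rw [hfun] at hs
  rw [hs.tsum_eq] at h
  exact h

set_option maxHeartbeats 1000000 in
lemma coeff_dS (n k : ℕ) :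
    aa (n+1) (k+1) * (2*((k:ℝ)+1)+((n:ℝ)+1)) =
      ((n:ℝ)+1)/(2*(n:ℝ)+3) * aa n (k+1) - ((n:ℝ)+2)/(2*(n:ℝ)+3) * aa (n+2) k := by
  unfold aa
  rw [show (n+1)+(k+1) = (n+k+1)+1 from by omega, show n+(k+1) = n+k+1 from by omega,
      show (n+2)+k = (n+k+1)+1 from by omega, OO_succ, OO_succ, Nat.factorial_succ]
  have h1 := OO_ne (n+k)
  have h2 : (k.factorial:ℝ) ≠ 0 := by positivity
  have h3 : (2*(n:ℝ)+3) ≠ 0 := by positivity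
  push_cast
  field_simp
  ring

lemma coeff_dS0 (n : ℕ) :
    aa (n+1) 0 * ((n:ℝ)+1) = ((n:ℝ)+1)/(2*(n:ℝ)+3) * aa n 0 := by
  unfold aa
  rw [show (n+1)+0 = n+1 from by omega, show n+0 = n from by omega, OO_succ]
  have h1 := OO_ne n
  have h3 : (2*(n:ℝ)+3) ≠ 0 := by positivity
  field_simp

set_option maxHeartbeats 1000000 in
lemma hasDerivAt_JJsucc (n : ℕ) (x : ℝ) :
    HasDerivAt (JJ (n+1))
      (((n:ℝ)+1)/(2*(n:ℝ)+3) * JJ n x - ((n:ℝ)+2)/(2*(n:ℝ)+3) * JJ (n+2) x) x := by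
  have h := hasDerivAt_JJ (n+1) x
  have hT := ((hasSum_JJ n x).mul_left (((n:ℝ)+1)/(2*(n:ℝ)+3))).sub
    (hasSum_shift ((hasSum_JJ (n+2) x).mul_left (((n:ℝ)+2)/(2*(n:ℝ)+3))))
  have hfun : (fun k : ℕ => ((n:ℝ)+1)/(2*(n:ℝ)+3) * (aa n k * x^(2*k+n))
        - (if k = 0 then 0 else ((n:ℝ)+2)/(2*(n:ℝ)+3) * (aa (n+2) (k-1) * x^(2*(k-1)+(n+2)))))
      = fun k : ℕ => aa (n+1) k * ((2*(k:ℝ)+((n+1:ℕ):ℝ)) * x^(2*k+(n+1)-1)) := by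
    funext k
    cases k with
    | zero =>
      simp only [if_pos rfl, sub_zero]
      rw [show 2*0+(n+1)-1 = n from by omega, show 2*0+n = n from by omega]
      push_cast
      linear_combination (-(x^n)) * coeff_dS0 n
    | succ k =>
      simp only [Nat.succ_ne_zero, if_false, Nat.succ_sub_one]
      rw [show 2*(k+1)+(n+1)-1 = 2*k+n+2 from by omega,
          show 2*(k+1)+n = 2*k+n+2 from by omega,
          show 2*k+(n+2) = 2*k+n+2 from by omega]
      push_cast
      linear_combination (-(x^(2*k+n+2))) * coeff_dS n k
  rw [← hfun] at h
  rw [hT.tsum_eq] at h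
  exact h

lemma sphBessel_eq : ∀ n x, sphBessel n x = JJ n x := by
  have key : ∀ n, (∀ x, sphBessel n x = JJ n x) ∧ (∀ x, sphBessel (n+1) x = JJ (n+1) x) := by
    intro n
    induction n with
    | zero =>
      constructor
      · intro x
        by_cases hx : x = 0
        · simp [sphBessel, hx, JJ0_zero]
        · have h := mul_JJ0 x
          simp only [sphBessel, if_neg hx]
          field_simp
          linarith
      · intro x
        by_cases hx : x = 0
        · simp [sphBessel, hx, JJ_succ_zero]
        · have h := sq_mul_JJ1 x
          show sphBessel 1 x = JJ 1 x
          simp only [sphBessel, if_neg hx]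
          field_simp
          linear_combination (-1) * h
    | succ n ih =>
      refine ⟨ih.2, fun x => ?_⟩
      by_cases hx : x = 0
      · subst hx
        show sphBessel (n+2) 0 = JJ (n+2) 0
        simp [sphBessel, JJ_succ_zero]
      · have h := JJ_rec n x
        show sphBessel (n+2) x = JJ (n+2) x
        simp only [sphBessel, if_neg hx]
        rw [ih.1 x, ih.2 x]
        field_simp
        linarith
  exact fun n => (key n).1

lemma sinc_eq_JJ (t : ℝ) : _root_.sinc t = JJ 0 (Real.pi * t) := by
  by_cases ht : t = 0
  · simp [_root_.sinc, ht, JJ0_zero]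
  · have hπt : Real.pi * t ≠ 0 := mul_ne_zero Real.pi_ne_zero ht
    have h := mul_JJ0 (Real.pi * t)
    simp only [_root_.sinc, if_neg ht]
    field_simp
    linarith

lemma sqrt_pos' (c : ℝ) (hc : 0 < c) : 0 < Real.sqrt c := Real.sqrt_pos.mpr hc

lemma legendreGamma_eq (n : ℕ) :
    legendreGamma n = Real.pi * ((n:ℝ) + 1) / (Real.sqrt (2*(n:ℝ)+1) * Real.sqrt (2*(n:ℝ)+3)) := by
  unfold legendreGamma
  rw [show 4 * ((n:ℝ) + 1)^2 - 1 = (2*(n:ℝ)+1) * (2*(n:ℝ)+3) by ring,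
    Real.sqrt_mul (by positivity)]

lemma hasDerivAt_comp_pi {n : ℕ} (t : ℝ) (d : ℝ)
    (h : HasDerivAt (JJ n) d (Real.pi * t)) :
    HasDerivAt (fun s => JJ n (Real.pi * s)) (d * Real.pi) t := by
  have hin : HasDerivAt (fun s : ℝ => Real.pi * s) Real.pi t := by
    simpa using (hasDerivAt_id t).const_mul Real.pi
  exact h.comp t hin

theorem chromDeriv_sinc' :
    ∀ (n : ℕ) (t : ℝ),
      chromDeriv legendreGamma n _root_.sinc t =
        (-1 : ℝ) ^ n * Real.sqrt (2 * n + 1) * JJ n (Real.pi * t) := by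
  have hsinc : _root_.sinc = fun t => JJ 0 (Real.pi * t) := funext sinc_eq_JJ
  have key : ∀ n, (∀ t, chromDeriv legendreGamma n _root_.sinc t
        = (-1:ℝ)^n * Real.sqrt (2*(n:ℝ)+1) * JJ n (Real.pi * t)) ∧
      (∀ t, chromDeriv legendreGamma (n+1) _root_.sinc t
        = (-1:ℝ)^(n+1) * Real.sqrt (2*((n+1:ℕ):ℝ)+1) * JJ (n+1) (Real.pi * t)) := by
    intro n
    induction n with
    | zero =>
      constructor
      · intro t
        show _root_.sinc t = _
        rw [sinc_eq_JJ]
        norm_num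
      · intro t
        show (1 / legendreGamma 0) * deriv _root_.sinc t = _
        have hD : HasDerivAt (fun s => JJ 0 (Real.pi * s)) (-JJ 1 (Real.pi*t) * Real.pi) t :=
          hasDerivAt_comp_pi t _ (hasDerivAt_JJ0 (Real.pi*t))
        rw [hsinc, hD.deriv, legendreGamma_eq 0]
        have h3 : (0:ℝ) < Real.sqrt 3 := sqrt_pos' 3 (by norm_num)
        have hπ := Real.pi_pos
        norm_num
        field_simp
    | succ n ih =>
      refine ⟨ih.2, fun t => ?_⟩
      show (1 / legendreGamma (n+1)) * deriv (chromDeriv legendreGamma (n+1) _root_.sinc) t +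
        (legendreGamma n / legendreGamma (n+1)) * chromDeriv legendreGamma n _root_.sinc t = _
      set s1 := Real.sqrt (2*(n:ℝ)+1) with hs1def
      set s3 := Real.sqrt (2*(n:ℝ)+3) with hs3def
      set s5 := Real.sqrt (2*(n:ℝ)+5) with hs5def
      have hs1 : 0 < s1 := sqrt_pos' _ (by positivity)
      have hs3 : 0 < s3 := sqrt_pos' _ (by positivity)
      have hs5 : 0 < s5 := sqrt_pos' _ (by positivity)
      have hs3sq : s3 * s3 = 2*(n:ℝ)+3 := Real.mul_self_sqrt (by positivity)
      have hc3 : (2*((n+1:ℕ):ℝ)+1) = 2*(n:ℝ)+3 := by push_cast; ring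
      have hc5 : (2*((n+1:ℕ):ℝ)+3) = 2*(n:ℝ)+5 := by push_cast; ring
      have hc5' : (2*((n+2:ℕ):ℝ)+1) = 2*(n:ℝ)+5 := by push_cast; ring
      have hγ1 : legendreGamma (n+1) = Real.pi * ((n:ℝ)+2) / (s3 * s5) := by
        rw [legendreGamma_eq (n+1), hc3, hc5, show ((n+1:ℕ):ℝ)+1 = (n:ℝ)+2 by push_cast; ring]
      have hγ0 : legendreGamma n = Real.pi * ((n:ℝ)+1) / (s1 * s3) := by
        rw [legendreGamma_eq n]
      have h1 : chromDeriv legendreGamma (n+1) _root_.sinc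
          = fun s => (-1:ℝ)^(n+1) * s3 * JJ (n+1) (Real.pi * s) := by
        funext s
        rw [ih.2 s, hc3]
      have hD : HasDerivAt (fun s => JJ (n+1) (Real.pi * s))
          ((((n:ℝ)+1)/(2*(n:ℝ)+3) * JJ n (Real.pi*t)
            - ((n:ℝ)+2)/(2*(n:ℝ)+3) * JJ (n+2) (Real.pi*t)) * Real.pi) t :=
        hasDerivAt_comp_pi t _ (hasDerivAt_JJsucc n (Real.pi*t))
      have hD2 := (hD.const_mul ((-1:ℝ)^(n+1) * s3)).deriv
      rw [h1, hD2, ih.1 t, hγ0, hγ1, hc5', ← hs5def]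
      have hπ := Real.pi_pos
      have hn2 : ((n:ℝ)+2) ≠ 0 := by positivity
      rw [← hs3sq]
      field_simp
      ring
  intro n t
  exact (key n).1 t
end ChromAux

/-- `K^n[sinc](t) = (−1)^n √(2n+1) j_n(πt)` for the chromatic derivatives
associated with the Legendre polynomials. -/
theorem chromDeriv_sinc :
    ∀ (n : ℕ) (t : ℝ),
      chromDeriv legendreGamma n _root_.sinc t =
        (-1 : ℝ) ^ n * Real.sqrt (2 * n + 1) * sphBessel n (Real.pi * t) := by
  intro n t
  rw [ChromAux.sphBessel_eq]
  exact ChromAux.chromDeriv_sinc' n t
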